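/- arXiv:1909.04066 — 2 statements merged into one kernel-verified Lean document; each statement's English description precedes it below -/
import Mathlib

section
/- Let a > 0, L > 0, α > 0. The linear span of the family of functions {x ↦ FRG_n^a(L, α, x) : n ∈ ℕ} is dense in the weighted Lebesgue space L²((0, ∞), w(x) dx), i.e., in the L² space of the measure on (0, ∞) with density w with respect to Lebesgue measure. -/
open MeasureTheory
open scoped ENNReal

/-- The Gegenbauer polynomial of degree `n` and order `a`, defined by the
explicit sum `G_n^a(x) = Σ_{j=0}^{⌊n/2⌋} (−1)^j Γ(n+a−j)/(j!(n−2j)!Γ(a)) (2x)^{n−2j}`. -/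
noncomputable def Geg (a : ℝ) (n : ℕ) (x : ℝ) : ℝ :=
  ∑ j ∈ Finset.range (n / 2 + 1),
    (-1 : ℝ) ^ j * Real.Gamma ((n : ℝ) + a - (j : ℝ)) /
      ((Nat.factorial j : ℝ) * (Nat.factorial (n - 2 * j) : ℝ) * Real.Gamma a) *
      (2 * x) ^ (n - 2 * j)

/-- The fractional rational Gegenbauer function `FRG_n^a(L, α, x) = G_n^a((x^α − L)/(x^α + L))`. -/
noncomputable def FRG (a L α : ℝ) (n : ℕ) (x : ℝ) : ℝ :=
  Geg a n ((x ^ α - L) / (x ^ α + L))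

/-- The weight `w(x) = (1 − ((x^α − L)/(x^α + L))²)^{a−1/2} · 2αL x^{α−1}/(x^α + L)²`. -/
noncomputable def FRGweight (a L α : ℝ) (x : ℝ) : ℝ :=
  (1 - ((x ^ α - L) / (x ^ α + L)) ^ 2) ^ (a - 1 / 2) *
    (2 * α * L * x ^ (α - 1) / (x ^ α + L) ^ 2)

/-- The measure `w(x) dx` on `(0, ∞)`. -/
noncomputable def FRGmeasure (a L α : ℝ) : Measure ℝ :=
  (volume.restrict (Set.Ioi 0)).withDensity fun x => ENNReal.ofReal (FRGweight a L α x)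

section Aux

open Set Filter

/-- The basic rational map `x ↦ (x^α - L)/(x^α + L)`. -/
noncomputable def Tmap (L α : ℝ) (x : ℝ) : ℝ := (x ^ α - L) / (x ^ α + L)

/-- The inverse map `y ↦ (L(1+y)/(1-y))^{1/α}`. -/
noncomputable def Smap (L α : ℝ) (y : ℝ) : ℝ := (L * (1 + y) / (1 - y)) ^ (1/α)

lemma den_pos {L : ℝ} (α : ℝ) (hL : 0 < L) {x : ℝ} (hx : 0 < x) : 0 < x ^ α + L := by
  have := Real.rpow_pos_of_pos hx α; linarith

lemma Tmap_mem {L α : ℝ} (hL : 0 < L) {x : ℝ} (hx : 0 < x) : Tmap L α x ∈ Ioo (-1 : ℝ) 1 := by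
  have hp := Real.rpow_pos_of_pos hx α
  have hd := den_pos α hL hx
  unfold Tmap
  constructor
  · rw [lt_div_iff₀ hd]; linarith
  · rw [div_lt_one hd]; linarith

lemma Smap_Tmap {L α : ℝ} (hL : 0 < L) (hα : 0 < α) {x : ℝ} (hx : 0 < x) :
    Smap L α (Tmap L α x) = x := by
  have hp := Real.rpow_pos_of_pos hx α
  have hd := den_pos α hL hx
  have h1 : L * (1 + Tmap L α x) / (1 - Tmap L α x) = x ^ α := by
    unfold Tmap
    have e1 : 1 - (x ^ α - L) / (x ^ α + L) = 2*L/(x^α+L) := by field_simp; ring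
    have e2 : 1 + (x ^ α - L) / (x ^ α + L) = 2*x^α/(x^α+L) := by field_simp; ring
    rw [e1, e2]
    field_simp
  unfold Smap
  rw [h1, ← Real.rpow_mul hx.le, mul_one_div_cancel hα.ne', Real.rpow_one]

lemma Tmap_Smap {L α : ℝ} (hL : 0 < L) (hα : 0 < α) {y : ℝ} (hy : y ∈ Ioo (-1 : ℝ) 1) :
    0 < Smap L α y ∧ Tmap L α (Smap L α y) = y := by
  obtain ⟨hy1, hy2⟩ := hy
  have h1y : 0 < 1 + y := by linarith
  have h2y : 0 < 1 - y := by linarith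
  have hB : 0 < L * (1 + y) / (1 - y) := by positivity
  have hS : 0 < Smap L α y := Real.rpow_pos_of_pos hB _
  refine ⟨hS, ?_⟩
  have hpow : (Smap L α y) ^ α = L * (1 + y) / (1 - y) := by
    unfold Smap
    rw [← Real.rpow_mul hB.le, one_div, inv_mul_cancel₀ hα.ne', Real.rpow_one]
  unfold Tmap
  rw [hpow]
  rw [div_eq_iff (by positivity : L * (1 + y) / (1 - y) + L ≠ 0)]
  field_simp
  ring

lemma Tmap_inj {L α : ℝ} (hL : 0 < L) (hα : 0 < α) : InjOn (Tmap L α) (Ioi 0) :=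
  fun x hx x' hx' h => by
    rw [← Smap_Tmap hL hα hx, ← Smap_Tmap hL hα hx', h]

lemma Tmap_image {L α : ℝ} (hL : 0 < L) (hα : 0 < α) :
    Tmap L α '' (Ioi 0) = Ioo (-1 : ℝ) 1 := by
  apply Subset.antisymm
  · rintro y ⟨x, hx, rfl⟩; exact Tmap_mem hL hx
  · intro y hy
    exact ⟨Smap L α y, (Tmap_Smap hL hα hy).1, (Tmap_Smap hL hα hy).2⟩

lemma Tmap_deriv {L α : ℝ} (hL : 0 < L) {x : ℝ} (hx : 0 < x) :
    HasDerivAt (Tmap L α) (2 * α * L * x ^ (α - 1) / (x ^ α + L) ^ 2) x := by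
  have hd := den_pos α hL hx
  have h1 : HasDerivAt (fun x : ℝ => x ^ α) (α * x ^ (α - 1)) x :=
    Real.hasDerivAt_rpow_const (Or.inl hx.ne')
  have h2 := (h1.sub_const L).div (h1.add_const L) hd.ne'
  have he : Tmap L α = fun x : ℝ => (x ^ α - L) / (x ^ α + L) := rfl
  rw [he]
  refine h2.congr_deriv ?_
  field_simp
  ring

lemma Tmap_continuousOn {L α : ℝ} (hL : 0 < L) :
    ContinuousOn (Tmap L α) (Ioi (0:ℝ)) := by
  intro x hx
  exact ((Tmap_deriv hL (mem_Ioi.mp hx)).continuousAt).continuousWithinAt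

lemma Smap_tendsto {L α : ℝ} (hL : 0 < L) (hα : 0 < α) :
    Tendsto (Smap L α) (nhdsWithin 1 (Iio 1)) atTop := by
  have hB : Tendsto (fun y : ℝ => L * (1 + y) / (1 - y)) (nhdsWithin 1 (Iio 1)) atTop := by
    simp only [div_eq_mul_inv]
    apply Tendsto.pos_mul_atTop (C := L * (1 + 1)) (by positivity)
    · apply Tendsto.mono_left _ nhdsWithin_le_nhds
      exact (continuous_const.mul (continuous_const.add continuous_id)).tendsto 1
    · apply tendsto_inv_nhdsGT_zero.comp
      apply tendsto_nhdsWithin_of_tendsto_nhds_of_eventually_within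
      · have h0 : Tendsto (fun y : ℝ => 1 - y) (nhds 1) (nhds (1 - 1)) :=
          (continuous_const.sub continuous_id).tendsto 1
        rw [sub_self] at h0
        exact h0.mono_left nhdsWithin_le_nhds
      · filter_upwards [self_mem_nhdsWithin] with y hy
        simp only [mem_Ioi, sub_pos]
        exact hy
  exact (tendsto_rpow_atTop (by positivity : (0:ℝ) < 1/α)).comp hB

lemma weight_integrable {a : ℝ} (ha : 0 < a) :
    IntegrableOn (fun y : ℝ => (1 - y ^ 2) ^ (a - 1/2)) (Ioo (-1 : ℝ) 1) := by
  set p : ℝ := a - 1/2 with hp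
  have hp1 : (-1 : ℝ) < p := by rw [hp]; linarith
  set C : ℝ := max 1 (2 ^ p) with hC
  have hC0 : 0 < C := lt_of_lt_of_le one_pos (le_max_left _ _)
  have hint1 : IntegrableOn (fun y : ℝ => (1 - y) ^ p) (Ioo (-1 : ℝ) 1) := by
    have h := (intervalIntegral.intervalIntegrable_rpow' (a := 0) (b := 2) hp1).comp_sub_left 1
    have h2 : IntervalIntegrable (fun y : ℝ => (1 - y) ^ p) volume (-1) 1 := by
      have h3 := h.symm
      rw [show (1:ℝ) - 2 = -1 by norm_num, show (1:ℝ) - 0 = 1 by norm_num] at h3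
      exact h3
    rw [intervalIntegrable_iff_integrableOn_Ioo_of_le (by norm_num)] at h2
    exact h2
  have hint2 : IntegrableOn (fun y : ℝ => (1 + y) ^ p) (Ioo (-1 : ℝ) 1) := by
    have h := (intervalIntegral.intervalIntegrable_rpow' (a := 0) (b := 2) hp1).comp_add_left 1
    have h2 : IntervalIntegrable (fun y : ℝ => (1 + y) ^ p) volume (-1) 1 := by
      rw [show (0:ℝ) - 1 = -1 by norm_num, show (2:ℝ) - 1 = 1 by norm_num] at h
      exact h
    rw [intervalIntegrable_iff_integrableOn_Ioo_of_le (by norm_num)] at h2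
    exact h2
  have hF : IntegrableOn (fun y : ℝ => C * (1 - y) ^ p + C * (1 + y) ^ p) (Ioo (-1:ℝ) 1) :=
    ((hint1.const_mul C).add (hint2.const_mul C))
  apply Integrable.mono' hF
  · apply ContinuousOn.aestronglyMeasurable _ measurableSet_Ioo
    intro y hy
    have h1 : 0 < 1 - y ^ 2 := by nlinarith [hy.1, hy.2]
    exact ContinuousAt.continuousWithinAt
      (ContinuousAt.rpow_const ((continuous_const.sub (continuous_pow 2)).continuousAt)
        (Or.inl h1.ne'))
  · rw [ae_restrict_iff' measurableSet_Ioo]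
    refine Eventually.of_forall fun y hy => ?_
    obtain ⟨hy1, hy2⟩ := hy
    have h1y : 0 < 1 + y := by linarith
    have h2y : 0 < 1 - y := by linarith
    have hsq : (1 : ℝ) - y ^ 2 = (1 - y) * (1 + y) := by ring
    have hnn : 0 ≤ ((1 : ℝ) - y ^ 2) ^ p := Real.rpow_nonneg (by nlinarith) _
    rw [Real.norm_eq_abs, abs_of_nonneg hnn, hsq, Real.mul_rpow h2y.le h1y.le]
    rcases le_or_gt 0 y with hy0 | hy0
    · have hb : (1 + y) ^ p ≤ C := by
        rcases le_or_gt 0 p with hp0 | hp0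
        · calc (1+y)^p ≤ 2^p := Real.rpow_le_rpow (by linarith) (by linarith) hp0
            _ ≤ C := le_max_right _ _
        · calc (1+y)^p ≤ 1^p :=
                Real.rpow_le_rpow_of_nonpos (by linarith) (by linarith) hp0.le
            _ ≤ C := by rw [Real.one_rpow]; exact le_max_left _ _
      calc (1-y)^p * (1+y)^p ≤ (1-y)^p * C :=
            mul_le_mul_of_nonneg_left hb (Real.rpow_nonneg h2y.le _)
        _ = C * (1-y)^p := mul_comm _ _
        _ ≤ C * (1-y)^p + C * (1+y)^p :=
            le_add_of_nonneg_right (mul_nonneg hC0.le (Real.rpow_nonneg h1y.le _))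
    · have hb : (1 - y) ^ p ≤ C := by
        rcases le_or_gt 0 p with hp0 | hp0
        · calc (1-y)^p ≤ 2^p := Real.rpow_le_rpow (by linarith) (by linarith) hp0
            _ ≤ C := le_max_right _ _
        · calc (1-y)^p ≤ 1^p :=
                Real.rpow_le_rpow_of_nonpos (by linarith) (by linarith) hp0.le
            _ ≤ C := by rw [Real.one_rpow]; exact le_max_left _ _
      calc (1-y)^p * (1+y)^p ≤ C * (1+y)^p :=
            mul_le_mul_of_nonneg_right hb (Real.rpow_nonneg h1y.le _)
        _ ≤ C * (1-y)^p + C * (1+y)^p :=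
            le_add_of_nonneg_left (mul_nonneg hC0.le (Real.rpow_nonneg h2y.le _))

lemma FRGweight_integrableOn {a L α : ℝ} (ha : 0 < a) (hL : 0 < L) (hα : 0 < α) :
    IntegrableOn (FRGweight a L α) (Ioi (0:ℝ)) := by
  have h := weight_integrable ha
  rw [← Tmap_image hL hα] at h
  rw [integrableOn_image_iff_integrableOn_abs_deriv_smul measurableSet_Ioi
      (fun x hx => (Tmap_deriv hL (mem_Ioi.mp hx)).hasDerivWithinAt) (Tmap_inj hL hα)] at h
  refine h.congr_fun (fun x hx => ?_) measurableSet_Ioi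
  have hx' : (0:ℝ) < x := hx
  have hd := den_pos α hL hx'
  have hT' : 0 ≤ 2*α*L*x^(α-1)/(x^α+L)^2 := by positivity
  simp only [smul_eq_mul, abs_of_nonneg hT']
  rw [mul_comm]
  rfl

lemma FRG_isFiniteMeasure {a L α : ℝ} (ha : 0 < a) (hL : 0 < L) (hα : 0 < α) :
    IsFiniteMeasure (FRGmeasure a L α) := by
  constructor
  rw [FRGmeasure, withDensity_apply _ MeasurableSet.univ, Measure.restrict_univ]
  exact (FRGweight_integrableOn ha hL hα).lintegral_lt_top

lemma geg_monomial_mem (a : ℝ) (ha : 0 < a) : ∀ n : ℕ,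
    (fun x : ℝ => x ^ n) ∈ Submodule.span ℝ (Set.range (Geg a)) := by
  intro n
  induction n using Nat.strong_induction_on with
  | _ n ih =>
    set c : ℕ → ℝ := fun j =>
      (-1 : ℝ) ^ j * Real.Gamma ((n : ℝ) + a - (j : ℝ)) /
        ((Nat.factorial j : ℝ) * (Nat.factorial (n - 2 * j) : ℝ) * Real.Gamma a) *
        2 ^ (n - 2 * j) with hc
    have hGeg : Geg a n = fun x : ℝ =>
        ∑ j ∈ Finset.range (n / 2 + 1), c j * x ^ (n - 2 * j) := by
      funext x
      unfold Geg
      refine Finset.sum_congr rfl fun j _ => ?_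
      rw [hc, mul_pow]
      ring
    have hc0 : 0 < c 0 := by
      have h1 : (0:ℝ) < Real.Gamma ((n : ℝ) + a - (0:ℕ)) := by
        apply Real.Gamma_pos_of_pos
        have : (0:ℝ) ≤ (n:ℝ) := Nat.cast_nonneg n
        push_cast; linarith
      have h2 : (0:ℝ) < Real.Gamma a := Real.Gamma_pos_of_pos ha
      rw [hc]
      simp only [pow_zero, Nat.factorial_zero, Nat.cast_one, Nat.mul_zero, Nat.sub_zero, one_mul]
      positivity
    have h0mem : 0 ∈ Finset.range (n / 2 + 1) := by simp
    have key : (fun x : ℝ => x ^ n) = (c 0)⁻¹ •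
        (Geg a n - ∑ j ∈ (Finset.range (n / 2 + 1)).erase 0,
          c j • (fun x : ℝ => x ^ (n - 2 * j))) := by
      funext x
      have hsum := Finset.add_sum_erase (Finset.range (n / 2 + 1))
        (fun j => c j * x ^ (n - 2 * j)) h0mem
      simp only [hGeg, Pi.smul_apply, Pi.sub_apply, Finset.sum_apply, smul_eq_mul]
      rw [← hsum]
      simp only [Nat.mul_zero, Nat.sub_zero]
      field_simp
      ring
    rw [key]
    refine Submodule.smul_mem _ _ (Submodule.sub_mem _ ?_ ?_)
    · exact Submodule.subset_span ⟨n, rfl⟩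
    · refine Submodule.sum_mem _ fun j hj => Submodule.smul_mem _ _ (ih _ ?_)
      rw [Finset.mem_erase, Finset.mem_range] at hj
      omega

lemma memℒp_comp_Tmap {a L α : ℝ} (ha : 0 < a) (hL : 0 < L) (hα : 0 < α)
    (G : ℝ → ℝ) (hG : Continuous G) :
    MemLp (fun x => G (Tmap L α x)) 2 (FRGmeasure a L α) := by
  haveI := FRG_isFiniteMeasure ha hL hα
  have hac : FRGmeasure a L α ≪ volume.restrict (Ioi 0) :=
    withDensity_absolutelyContinuous _ _
  have hmeas : AEStronglyMeasurable (fun x => G (Tmap L α x)) (FRGmeasure a L α) := by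
    apply AEStronglyMeasurable.mono_ac hac
    apply ContinuousOn.aestronglyMeasurable _ measurableSet_Ioi
    exact hG.comp_continuousOn (Tmap_continuousOn hL)
  obtain ⟨C, hC⟩ := (isCompact_Icc (a := (-1:ℝ)) (b := 1)).exists_bound_of_continuousOn
    hG.continuousOn
  apply MemLp.of_bound hmeas C
  have hae : ∀ᵐ x ∂(FRGmeasure a L α), x ∈ Ioi (0:ℝ) :=
    hac.ae_le (ae_restrict_mem measurableSet_Ioi)
  filter_upwards [hae] with x hx
  exact hC _ (Ioo_subset_Icc_self (Tmap_mem hL hx))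

lemma geg_continuous (a : ℝ) (n : ℕ) : Continuous (Geg a n) := by
  unfold Geg
  exact continuous_finset_sum _ fun j _ =>
    continuous_const.mul ((continuous_const.mul continuous_id).pow _)

end Aux

set_option synthInstance.maxHeartbeats 1000000 in
/-- The linear span of the fractional rational Gegenbauer functions is dense in
the weighted space `L²((0, ∞), w(x) dx)`. -/
theorem stmt_6 (a L α : ℝ) (ha : 0 < a) (hL : 0 < L) (hα : 0 < α) :
    Dense (↑(Submodule.span ℝ
        {f : Lp ℝ 2 (FRGmeasure a L α) |
          ∃ n : ℕ, ⇑f =ᵐ[FRGmeasure a L α] FRG a L α n}) :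
      Set (Lp ℝ 2 (FRGmeasure a L α))) := by
  classical
  open Set Filter in
  set μ := FRGmeasure a L α with hμdef
  haveI : IsFiniteMeasure μ := FRG_isFiniteMeasure ha hL hα
  set V := Submodule.span ℝ
      {f : Lp ℝ 2 μ | ∃ n : ℕ, ⇑f =ᵐ[μ] FRG a L α n} with hVdef
  have hac : μ ≪ volume.restrict (Ioi 0) := withDensity_absolutelyContinuous _ _
  have hae : ∀ᵐ x ∂μ, x ∈ Ioi (0:ℝ) := hac.ae_le (ae_restrict_mem measurableSet_Ioi)
  -- transfer of span membership through composition with Tmap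
  have hQ : ∀ g ∈ Submodule.span ℝ (Set.range (Geg a)),
      ∃ hg : MemLp (fun x => g (Tmap L α x)) 2 μ, hg.toLp _ ∈ V := by
    intro g hg
    refine Submodule.span_induction ?_ ?_ ?_ ?_ hg
    · rintro g' ⟨n, rfl⟩
      refine ⟨memℒp_comp_Tmap ha hL hα _ (geg_continuous a n), ?_⟩
      apply Submodule.subset_span
      exact ⟨n, MemLp.coeFn_toLp _⟩
    · refine ⟨MemLp.zero, ?_⟩
      show MemLp.toLp (0 : ℝ → ℝ) MemLp.zero ∈ V
      rw [MemLp.toLp_zero]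
      exact Submodule.zero_mem _
    · rintro g₁ g₂ hg₁ hg₂ ⟨h1, m1⟩ ⟨h2, m2⟩
      refine ⟨h1.add h2, ?_⟩
      show MemLp.toLp ((fun x => g₁ (Tmap L α x)) + fun x => g₂ (Tmap L α x)) (h1.add h2) ∈ V
      rw [MemLp.toLp_add h1 h2]
      exact Submodule.add_mem _ m1 m2
    · rintro r g' hg' ⟨h1, m1⟩
      refine ⟨h1.const_smul r, ?_⟩
      show MemLp.toLp (r • fun x => g' (Tmap L α x)) (h1.const_smul r) ∈ V
      rw [MemLp.toLp_const_smul r h1]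
      exact Submodule.smul_mem _ _ m1
  have hpoly : ∀ P : Polynomial ℝ,
      (fun x : ℝ => P.eval x) ∈ Submodule.span ℝ (Set.range (Geg a)) := by
    intro P
    have hrw : (fun x : ℝ => P.eval x)
        = ∑ i ∈ Finset.range (P.natDegree + 1), P.coeff i • (fun x : ℝ => x ^ i) := by
      funext x
      rw [Finset.sum_apply]
      simp only [Pi.smul_apply, smul_eq_mul]
      exact Polynomial.eval_eq_sum_range _
    rw [hrw]
    exact Submodule.sum_mem _ fun i _ => Submodule.smul_mem _ _ (geg_monomial_mem a ha i)
  -- density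
  intro f
  rw [Metric.mem_closure_iff]
  intro ε hε
  have hf : MemLp (⇑f) 2 μ := Lp.memLp f
  have hε2 : ENNReal.ofReal (ε/2) ≠ 0 := by
    simp only [ne_eq, ENNReal.ofReal_eq_zero, not_le]
    positivity
  obtain ⟨g, gsupp, hfg, gcont, gmem⟩ :=
    hf.exists_hasCompactSupport_eLpNorm_sub_le (by norm_num) hε2
  obtain ⟨M, hM⟩ : ∃ M : ℝ, ∀ z : ℝ, M ≤ z → g z = 0 := by
    obtain ⟨M, hM⟩ := gsupp.isCompact.bddAbove
    refine ⟨M + 1, fun z hz => ?_⟩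
    apply image_eq_zero_of_notMem_tsupport
    intro hmem
    have := hM hmem
    linarith
  set Gfun : ℝ → ℝ := fun y => if y < 1 then g (Smap L α y) else 0 with hGf
  have hG1 : Gfun 1 = 0 := by simp [hGf]
  have hGcont : ContinuousOn Gfun (Icc (-1:ℝ) 1) := by
    intro y hy
    by_cases hy1 : y < 1
    · have hSc : ContinuousAt (Smap L α) y := by
        apply ContinuousAt.rpow_const
        · exact ((continuousAt_const.mul (continuousAt_const.add continuousAt_id)).div
            (continuousAt_const.sub continuousAt_id) (by intro h; rw [sub_eq_zero] at h; exact hy1.ne' h))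
        · right; positivity
      have heq : Gfun =ᶠ[nhds y] fun z => g (Smap L α z) := by
        filter_upwards [IsOpen.mem_nhds isOpen_Iio hy1] with z hz
        simp only [hGf]
        rw [if_pos (mem_Iio.mp hz)]
      exact ((gcont.continuousAt.comp hSc).congr heq.symm).continuousWithinAt
    · have hy1' : y = 1 := le_antisymm hy.2 (not_lt.mp hy1)
      subst hy1'
      have hev : ∀ᶠ z in nhdsWithin 1 (Iio 1), Gfun z = 0 := by
        have h1 : ∀ᶠ z in nhdsWithin 1 (Iio 1), M ≤ Smap L α z :=
          (Smap_tendsto hL hα).eventually_ge_atTop M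
        filter_upwards [h1, self_mem_nhdsWithin] with z h1z h2z
        simp only [hGf]
        rw [if_pos (mem_Iio.mp h2z)]
        exact hM _ h1z
      obtain ⟨u, hu, hsub⟩ := mem_nhdsLT_iff_exists_Ioo_subset.mp hev
      have hsplit : ∀ᶠ z in nhdsWithin 1 (Icc (-1:ℝ) 1), Gfun z = 0 := by
        have h2 : ∀ᶠ z in nhdsWithin 1 (Icc (-1:ℝ) 1), z ∈ Ioi u :=
          mem_nhdsWithin_of_mem_nhds (Ioi_mem_nhds hu)
        filter_upwards [h2, self_mem_nhdsWithin] with z hz1 hz2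
        rcases eq_or_lt_of_le hz2.2 with h | h
        · rw [h]; exact hG1
        · exact hsub ⟨hz1, h⟩
      unfold ContinuousWithinAt
      rw [hG1]
      exact Tendsto.congr' (hsplit.mono fun z hz => hz.symm) tendsto_const_nhds
  -- quantities
  set m : ℝ := (μ Set.univ).toReal with hm
  have hm0 : 0 ≤ m := ENNReal.toReal_nonneg
  set s : ℝ := m ^ (2⁻¹ : ℝ) with hs
  have hs0 : 0 ≤ s := Real.rpow_nonneg hm0 _
  set δ : ℝ := ε / (2 * (s + 1)) with hδ
  have hδ0 : 0 < δ := by positivity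
  -- Stone–Weierstrass
  obtain ⟨P, hP⟩ : ∃ P : Polynomial ℝ, ∀ y ∈ Icc (-1:ℝ) 1, |Gfun y - P.eval y| ≤ δ := by
    set G : C(Icc (-1:ℝ) 1, ℝ) := ⟨(Icc (-1:ℝ) 1).restrict Gfun,
      continuousOn_iff_continuous_restrict.mp hGcont⟩ with hGdef
    have htop := polynomialFunctions_closure_eq_top (-1:ℝ) 1
    have hmem : G ∈ closure ((polynomialFunctions (Icc (-1:ℝ) 1) : Subalgebra ℝ _) : Set _) := by
      have hmem' : G ∈ (polynomialFunctions (Icc (-1:ℝ) 1)).topologicalClosure := by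
        rw [htop]; trivial
      rwa [← Subalgebra.topologicalClosure_coe]
    rw [Metric.mem_closure_iff] at hmem
    obtain ⟨Pc, hPcmem, hPcdist⟩ := hmem δ hδ0
    rw [polynomialFunctions_coe] at hPcmem
    obtain ⟨P, rfl⟩ := hPcmem
    refine ⟨P, fun y hy => ?_⟩
    have hd := ContinuousMap.dist_apply_le_dist (f := G)
      (g := Polynomial.toContinuousMapOnAlgHom (Icc (-1:ℝ) 1) P) ⟨y, hy⟩
    rw [Real.dist_eq] at hd
    exact hd.trans hPcdist.le
  obtain ⟨hPm, hPV⟩ := hQ _ (hpoly P)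
  refine ⟨hPm.toLp _, hPV, ?_⟩
  -- distance estimates
  have hb1 : dist f (gmem.toLp g) ≤ ε/2 := by
    rw [Lp.dist_def]
    have hcongr : (⇑f - ⇑(gmem.toLp g)) =ᵐ[μ] (⇑f - g) :=
      EventuallyEq.sub (EventuallyEq.refl _ _) (MemLp.coeFn_toLp gmem)
    rw [eLpNorm_congr_ae hcongr]
    have := ENNReal.toReal_mono ENNReal.ofReal_ne_top hfg
    rwa [ENNReal.toReal_ofReal (by positivity)] at this
  have hb2 : dist (gmem.toLp g) (hPm.toLp _) ≤ s * δ := by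
    rw [Lp.dist_def]
    have hcongr : (⇑(gmem.toLp g) - ⇑(hPm.toLp _)) =ᵐ[μ]
        (g - fun x => (fun x : ℝ => P.eval x) (Tmap L α x)) :=
      EventuallyEq.sub (MemLp.coeFn_toLp gmem) (MemLp.coeFn_toLp hPm)
    rw [eLpNorm_congr_ae hcongr]
    have hbd : ∀ᵐ x ∂μ, ‖(g - fun x => (fun x : ℝ => P.eval x) (Tmap L α x)) x‖ ≤ δ := by
      filter_upwards [hae] with x hx
      have hT := Tmap_mem (α := α) hL hx
      have h1 : g x = Gfun (Tmap L α x) := by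
        simp only [hGf]
        rw [if_pos hT.2, Smap_Tmap hL hα hx]
      simp only [Pi.sub_apply, Real.norm_eq_abs]
      rw [h1]
      exact hP _ (Ioo_subset_Icc_self hT)
    have h2 := eLpNorm_le_of_ae_bound (p := 2) (μ := μ) hbd
    have hfin : (μ Set.univ ^ (((2:ℝ≥0∞).toReal)⁻¹ : ℝ) * ENNReal.ofReal δ) ≠ ⊤ := by
      apply ENNReal.mul_ne_top _ ENNReal.ofReal_ne_top
      apply ENNReal.rpow_ne_top_of_nonneg _ (measure_ne_top μ _)
      norm_num
    have h3 := ENNReal.toReal_mono hfin h2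
    rw [ENNReal.toReal_mul, ENNReal.toReal_ofReal hδ0.le, ← ENNReal.toReal_rpow] at h3
    have h4 : ((2:ℝ≥0∞).toReal)⁻¹ = (2⁻¹ : ℝ) := by norm_num
    rw [h4] at h3
    exact h3
  have hsd : s * δ < ε/2 := by
    have e : s * δ = ε * (s / (s+1)) / 2 := by
      rw [hδ]; field_simp
    rw [e]
    have h1 : s / (s+1) < 1 := (div_lt_one (by positivity)).mpr (by linarith)
    have h2 : ε * (s/(s+1)) < ε * 1 := by
      apply mul_lt_mul_of_pos_left h1 hε
    linarith
  calc dist f (hPm.toLp _) ≤ dist f (gmem.toLp g) + dist (gmem.toLp g) (hPm.toLp _) :=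
        dist_triangle _ _ _
    _ ≤ ε/2 + s * δ := add_le_add hb1 hb2
    _ < ε/2 + ε/2 := by linarith
    _ = ε := by ring
end

section
/- Let λ be a real number and define y : (0, ∞) → ℝ by the truncated Baker series y(x) = 1 + λx + (4/3) x^{3/2} + (2λ/5) x^{5/2} + (1/3) x³ + (3λ²/70) x^{7/2}. Then the residual function x ↦ y''(x) − x^{−1/2} y(x)^{3/2} is O(x²) as x → 0⁺; moreover y extends continuously to 0 with y(0) = 1 and right derivative λ at 0. -/
open Topology Filter Asymptotics

lemma mb_aux (c C s : ℝ) (hc : |c| ≤ C) (h3 : 0 ≤ s) (h4 : s ≤ 1) {k n : ℕ} (hkn : k ≤ n) :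
    |c * s ^ n| ≤ C * s ^ k := by
  rw [abs_mul, abs_pow, abs_of_nonneg h3]
  exact mul_le_mul hc (pow_le_pow_of_le_one h3 h4 hkn) (pow_nonneg h3 n) (le_trans (abs_nonneg c) hc)

set_option maxHeartbeats 1000000 in
lemma key_aux (l L s : ℝ) (hL : L = |l|) (hs0 : 0 < s) (hs1 : s ≤ 1)
    (hsu : (2 + 2*L + L^2) * s^2 ≤ 1/2) :
    |(1 + 3*l/2*s^2 + 2*s^3 + 3*l^2/8*s^4) -
      (1 + l*s^2 + 4/3*s^3 + 2*l/5*s^5 + 1/3*s^6 + 3*l^2/70*s^7) ^ ((3:ℝ)/2)|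
      ≤ ((2 + 2*L + L^2)^3 + (2 + 3*L + L^2 + L^3 + L^4)) * s^5 := by
  have hL0 : 0 ≤ L := hL ▸ abs_nonneg l
  have hl1 : -L ≤ l := by rw [hL]; exact neg_abs_le l
  have hl2 : l ≤ L := hL ▸ le_abs_self l
  obtain ⟨M, hM⟩ : ∃ M : ℝ, M = 2 + 2*L + L^2 := ⟨_, rfl⟩
  obtain ⟨u, hu_def⟩ : ∃ u : ℝ, u = l*s^2 + 4/3*s^3 + 2*l/5*s^5 + 1/3*s^6 + 3*l^2/70*s^7 := ⟨_, rfl⟩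
  obtain ⟨P, hP⟩ : ∃ P : ℝ, P = 1 + 3*l/2*s^2 + 2*s^3 + 3*l^2/8*s^4 := ⟨_, rfl⟩
  obtain ⟨Q, hQ⟩ : ∃ Q : ℝ, Q = 1 + 3/2*u + 3/8*u^2 := ⟨_, rfl⟩
  obtain ⟨a, ha⟩ : ∃ a : ℝ, a = (1 + u) ^ ((3:ℝ)/2) := ⟨_, rfl⟩
  rw [show (1 + 3*l/2*s^2 + 2*s^3 + 3*l^2/8*s^4) = P from hP.symm,
    show (1 + l*s^2 + 4/3*s^3 + 2*l/5*s^5 + 1/3*s^6 + 3*l^2/70*s^7) = 1 + u by rw [hu_def]; ring,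
    show (1+u) ^ ((3:ℝ)/2) = a from ha.symm, hM.symm]
  -- monomial bounds for u
  have b1 := mb_aux l L s (by rw [hL]) hs0.le hs1 (le_refl 2)
  have b2 : |s^3| ≤ s^2 := by
    have := mb_aux 1 1 s (by norm_num) hs0.le hs1 (show (2:ℕ) ≤ 3 by norm_num)
    simpa using this
  have b3 := mb_aux l L s (by rw [hL]) hs0.le hs1 (show (2:ℕ) ≤ 5 by norm_num)
  have b4 : |s^6| ≤ s^2 := by
    have := mb_aux 1 1 s (by norm_num) hs0.le hs1 (show (2:ℕ) ≤ 6 by norm_num)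
    simpa using this
  have b5 : |l^2 * s^7| ≤ L^2 * s^2 := by
    refine mb_aux (l^2) (L^2) s ?_ hs0.le hs1 (show (2:ℕ) ≤ 7 by norm_num)
    rw [abs_pow, hL]
  have hu : |u| ≤ M * s^2 := by
    rw [hu_def, hM, abs_le]
    rw [abs_le] at b1 b2 b3 b4 b5
    constructor <;>
      linarith [b1.1, b2.1, b3.1, b4.1, b5.1, b1.2, b2.2, b3.2, b4.2, b5.2, sq_nonneg s,
        mul_nonneg hL0 (sq_nonneg s), mul_nonneg (mul_nonneg hL0 hL0) (sq_nonneg s)]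
  have hu2 : |u| ≤ 1/2 := hu.trans (by rw [hM]; exact hsu)
  have huab := abs_le.1 hu2
  have h1u : (0:ℝ) ≤ 1 + u := by linarith [huab.1]
  have ha0 : 0 ≤ a := ha ▸ Real.rpow_nonneg h1u _
  have ha2 : a^2 = (1+u)^3 := by
    rw [ha, ← Real.rpow_natCast ((1+u) ^ ((3:ℝ)/2)) 2, ← Real.rpow_mul h1u,
      ← Real.rpow_natCast (1+u) 3]
    norm_num
  have hQ4 : (1:ℝ)/4 ≤ Q := by
    rw [hQ]; nlinarith [huab.1, huab.2, sq_nonneg u]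
  have hQa : |Q - a| ≤ |u|^3 := by
    have hfac : (Q - a) * (Q + a) = 1/8*u^3 + 9/64*u^4 := by
      have : (Q - a) * (Q + a) = Q^2 - a^2 := by ring
      rw [this, ha2, hQ]; ring
    have e1 : |Q - a| * (Q + a) = |1/8*u^3 + 9/64*u^4| := by
      rw [← hfac, abs_mul, abs_of_nonneg (by linarith : (0:ℝ) ≤ Q + a)]
    have e2 : |1/8*u^3 + 9/64*u^4| ≤ 1/4 * |u|^3 := by
      calc |1/8*u^3 + 9/64*u^4| ≤ |1/8*u^3| + |9/64*u^4| := abs_add_le _ _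
        _ = 1/8*|u|^3 + 9/64*|u|^4 := by
            rw [abs_mul, abs_mul, abs_pow, abs_pow,
              abs_of_nonneg (by norm_num : (0:ℝ) ≤ 1/8), abs_of_nonneg (by norm_num : (0:ℝ) ≤ 9/64)]
        _ ≤ 1/4 * |u|^3 := by nlinarith [abs_nonneg u, pow_nonneg (abs_nonneg u) 3, hu2]
    have e3 : |Q - a| * (1/4) ≤ |Q - a| * (Q + a) :=
      mul_le_mul_of_nonneg_left (by linarith) (abs_nonneg _)
    linarith [e1.le, e2, e3]
  have hu3 : |u|^3 ≤ M^3 * s^5 := by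
    have h1 : |u|^3 ≤ (M * s^2)^3 := pow_le_pow_left₀ (abs_nonneg u) hu 3
    have h2 : s^6 ≤ s^5 := pow_le_pow_of_le_one hs0.le hs1 (by norm_num)
    have hM0 : 0 ≤ M := by rw [hM]; nlinarith
    nlinarith [pow_nonneg hM0 3, pow_nonneg hs0.le 6]
  -- |Q - P| ≤ C2 * s^5
  have c1 := mb_aux l L s (by rw [hL]) hs0.le hs1 (le_refl 5)
  have c2 : |s^6| ≤ s^5 := by
    have := mb_aux 1 1 s (by norm_num) hs0.le hs1 (show (5:ℕ) ≤ 6 by norm_num); simpa using this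
  have c3 : |l^2 * s^7| ≤ L^2 * s^5 :=
    mb_aux (l^2) (L^2) s (by rw [abs_pow, hL]) hs0.le hs1 (show (5:ℕ) ≤ 7 by norm_num)
  have c4 := mb_aux l L s (by rw [hL]) hs0.le hs1 (show (5:ℕ) ≤ 8 by norm_num)
  have c5 : |s^9| ≤ s^5 := by
    have := mb_aux 1 1 s (by norm_num) hs0.le hs1 (show (5:ℕ) ≤ 9 by norm_num); simpa using this
  have c6 : |l^3 * s^9| ≤ L^3 * s^5 :=
    mb_aux (l^3) (L^3) s (by rw [abs_pow, hL]) hs0.le hs1 (show (5:ℕ) ≤ 9 by norm_num)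
  have c7 : |l^2 * s^10| ≤ L^2 * s^5 :=
    mb_aux (l^2) (L^2) s (by rw [abs_pow, hL]) hs0.le hs1 (show (5:ℕ) ≤ 10 by norm_num)
  have c8 := mb_aux l L s (by rw [hL]) hs0.le hs1 (show (5:ℕ) ≤ 11 by norm_num)
  have c9 : |s^12| ≤ s^5 := by
    have := mb_aux 1 1 s (by norm_num) hs0.le hs1 (show (5:ℕ) ≤ 12 by norm_num); simpa using this
  have c10 : |l^3 * s^12| ≤ L^3 * s^5 :=
    mb_aux (l^3) (L^3) s (by rw [abs_pow, hL]) hs0.le hs1 (show (5:ℕ) ≤ 12 by norm_num)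
  have c11 : |l^2 * s^13| ≤ L^2 * s^5 :=
    mb_aux (l^2) (L^2) s (by rw [abs_pow, hL]) hs0.le hs1 (show (5:ℕ) ≤ 13 by norm_num)
  have c12 : |l^4 * s^14| ≤ L^4 * s^5 :=
    mb_aux (l^4) (L^4) s (by rw [abs_pow, hL]) hs0.le hs1 (show (5:ℕ) ≤ 14 by norm_num)
  have hQPeq : Q - P = 8/5*(l*s^5) + 7/6*(s^6) + 51/140*(l^2*s^7) + 13/20*(l*s^8)
      + 1/3*(s^9) + 9/280*(l^3*s^9) + 18/175*(l^2*s^10) + 1/10*(l*s^11)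
      + 1/24*(s^12) + 9/700*(l^3*s^12) + 3/280*(l^2*s^13) + 27/39200*(l^4*s^14) := by
    rw [hQ, hP, hu_def]; ring
  have hQP : |Q - P| ≤ (2 + 3*L + L^2 + L^3 + L^4) * s^5 := by
    rw [hQPeq, abs_le]
    rw [abs_le] at c1 c2 c3 c4 c5 c6 c7 c8 c9 c10 c11 c12
    have d0 : 0 ≤ s^5 := pow_nonneg hs0.le 5
    have d1 : 0 ≤ L * s^5 := mul_nonneg hL0 d0
    have d2 : 0 ≤ L^2 * s^5 := mul_nonneg (pow_nonneg hL0 2) d0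
    have d3 : 0 ≤ L^3 * s^5 := mul_nonneg (pow_nonneg hL0 3) d0
    have d4 : 0 ≤ L^4 * s^5 := mul_nonneg (pow_nonneg hL0 4) d0
    constructor <;> linarith [c1.1, c1.2, c2.1, c2.2, c3.1, c3.2, c4.1, c4.2, c5.1, c5.2,
      c6.1, c6.2, c7.1, c7.2, c8.1, c8.2, c9.1, c9.2, c10.1, c10.2, c11.1, c11.2, c12.1, c12.2,
      d0, d1, d2, d3, d4]
  calc |P - a| ≤ |P - Q| + |Q - a| := abs_sub_le P Q a
    _ ≤ (2 + 3*L + L^2 + L^3 + L^4) * s^5 + M^3 * s^5 := by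
        rw [abs_sub_comm]; exact add_le_add hQP (hQa.trans hu3)
    _ = (M^3 + (2 + 3*L + L^2 + L^3 + L^4)) * s^5 := by ring



noncomputable def Ffun (l : ℝ) : ℝ → ℝ := fun x =>
  1 + l * x + 4 / 3 * x ^ ((3 : ℝ) / 2) + 2 * l / 5 * x ^ ((5 : ℝ) / 2) +
    1 / 3 * x ^ (3 : ℕ) + 3 * l ^ 2 / 70 * x ^ ((7 : ℝ) / 2)

noncomputable def Gfun (l : ℝ) : ℝ → ℝ := fun t =>
  l + 2 * t ^ ((1:ℝ)/2) + l * t ^ ((3:ℝ)/2) + t ^ (2:ℕ) + 3 * l ^ 2 / 20 * t ^ ((5:ℝ)/2)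

noncomputable def Hfun (l : ℝ) : ℝ → ℝ := fun t =>
  t ^ (-(1:ℝ)/2) + 3 * l / 2 * t ^ ((1:ℝ)/2) + 2 * t + 3 * l ^ 2 / 8 * t ^ ((3:ℝ)/2)

lemma hF' (l : ℝ) : ∀ t : ℝ, 0 < t → HasDerivAt (Ffun l) (Gfun l t) t := by
  intro t ht
  have h3 : HasDerivAt (fun x : ℝ => x ^ ((3:ℝ)/2)) ((3:ℝ)/2 * t ^ ((3:ℝ)/2 - 1)) t :=
    Real.hasDerivAt_rpow_const (Or.inl ht.ne')
  have h5 : HasDerivAt (fun x : ℝ => x ^ ((5:ℝ)/2)) ((5:ℝ)/2 * t ^ ((5:ℝ)/2 - 1)) t :=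
    Real.hasDerivAt_rpow_const (Or.inl ht.ne')
  have h7 : HasDerivAt (fun x : ℝ => x ^ ((7:ℝ)/2)) ((7:ℝ)/2 * t ^ ((7:ℝ)/2 - 1)) t :=
    Real.hasDerivAt_rpow_const (Or.inl ht.ne')
  have := (((((hasDerivAt_const t (1:ℝ)).add ((hasDerivAt_id t).const_mul l)).add
      (h3.const_mul (4/3 : ℝ))).add (h5.const_mul (2*l/5))).add
      ((hasDerivAt_pow 3 t).const_mul (1/3 : ℝ))).add (h7.const_mul (3*l^2/70))
  convert this using 1
  case e'_4 => rfl
  case e'_5 => rfl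
  case e'_8 => rfl
  rw [show (3:ℝ)/2 - 1 = 1/2 by norm_num, show (5:ℝ)/2 - 1 = 3/2 by norm_num,
    show (7:ℝ)/2 - 1 = 5/2 by norm_num, Gfun]
  push_cast
  ring

lemma hG' (l : ℝ) : ∀ t : ℝ, 0 < t → HasDerivAt (Gfun l) (Hfun l t) t := by
  intro t ht
  have h1 : HasDerivAt (fun x : ℝ => x ^ ((1:ℝ)/2)) ((1:ℝ)/2 * t ^ ((1:ℝ)/2 - 1)) t :=
    Real.hasDerivAt_rpow_const (Or.inl ht.ne')
  have h3 : HasDerivAt (fun x : ℝ => x ^ ((3:ℝ)/2)) ((3:ℝ)/2 * t ^ ((3:ℝ)/2 - 1)) t :=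
    Real.hasDerivAt_rpow_const (Or.inl ht.ne')
  have h5 : HasDerivAt (fun x : ℝ => x ^ ((5:ℝ)/2)) ((5:ℝ)/2 * t ^ ((5:ℝ)/2 - 1)) t :=
    Real.hasDerivAt_rpow_const (Or.inl ht.ne')
  have := ((((hasDerivAt_const t l).add (h1.const_mul (2:ℝ))).add
      (h3.const_mul l)).add (hasDerivAt_pow 2 t)).add (h5.const_mul (3*l^2/20))
  convert this using 1
  case e'_4 => rfl
  case e'_5 => rfl
  case e'_8 => rfl
  rw [show (1:ℝ)/2 - 1 = -(1)/2 by norm_num, show (3:ℝ)/2 - 1 = 1/2 by norm_num,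
    show (5:ℝ)/2 - 1 = 3/2 by norm_num, Hfun]
  push_cast
  ring

lemma hdd (l : ℝ) : ∀ x : ℝ, 0 < x → deriv (deriv (Ffun l)) x = Hfun l x := by
  intro x hx
  have hev : deriv (Ffun l) =ᶠ[𝓝 x] Gfun l := by
    filter_upwards [Ioi_mem_nhds hx] with t ht
    exact (hF' l t ht).deriv
  rw [hev.deriv_eq, (hG' l x hx).deriv]

lemma hF0 (l : ℝ) : HasDerivAt (Ffun l) l 0 := by
  have h3 : HasDerivAt (fun x : ℝ => x ^ ((3:ℝ)/2)) ((3:ℝ)/2 * (0:ℝ) ^ ((3:ℝ)/2 - 1)) 0 :=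
    Real.hasDerivAt_rpow_const (Or.inr (by norm_num))
  have h5 : HasDerivAt (fun x : ℝ => x ^ ((5:ℝ)/2)) ((5:ℝ)/2 * (0:ℝ) ^ ((5:ℝ)/2 - 1)) 0 :=
    Real.hasDerivAt_rpow_const (Or.inr (by norm_num))
  have h7 : HasDerivAt (fun x : ℝ => x ^ ((7:ℝ)/2)) ((7:ℝ)/2 * (0:ℝ) ^ ((7:ℝ)/2 - 1)) 0 :=
    Real.hasDerivAt_rpow_const (Or.inr (by norm_num))
  have := (((((hasDerivAt_const (0:ℝ) (1:ℝ)).add ((hasDerivAt_id (0:ℝ)).const_mul l)).add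
      (h3.const_mul (4/3 : ℝ))).add (h5.const_mul (2*l/5))).add
      ((hasDerivAt_pow 3 (0:ℝ)).const_mul (1/3 : ℝ))).add (h7.const_mul (3*l^2/70))
  convert this using 1
  case e'_4 => rfl
  case e'_5 => rfl
  case e'_8 => rfl
  rw [show (3:ℝ)/2 - 1 = 1/2 by norm_num, show (5:ℝ)/2 - 1 = 3/2 by norm_num,
    show (7:ℝ)/2 - 1 = 5/2 by norm_num, Real.zero_rpow (by norm_num : (1:ℝ)/2 ≠ 0),
    Real.zero_rpow (by norm_num : (3:ℝ)/2 ≠ 0), Real.zero_rpow (by norm_num : (5:ℝ)/2 ≠ 0)]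
  norm_num

lemma hFzero (l : ℝ) : Ffun l 0 = 1 := by
  rw [Ffun]
  rw [Real.zero_rpow (by norm_num : (3:ℝ)/2 ≠ 0), Real.zero_rpow (by norm_num : (5:ℝ)/2 ≠ 0),
    Real.zero_rpow (by norm_num : (7:ℝ)/2 ≠ 0)]
  norm_num


lemma rp_aux {x : ℝ} (hx : 0 < x) (n : ℕ) : x ^ ((n : ℝ)/2) = Real.sqrt x ^ n := by
  have h : (n : ℝ)/2 = (1/2) * n := by ring
  rw [h, Real.rpow_mul hx.le, Real.sqrt_eq_rpow, Real.rpow_natCast]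

lemma bigO_aux (l : ℝ) :
    (fun x : ℝ => deriv (deriv (Ffun l)) x - x ^ (-(1 : ℝ) / 2) * Ffun l x ^ ((3 : ℝ) / 2))
      =O[𝓝[>] (0 : ℝ)] (fun x : ℝ => x ^ 2) := by
  set L : ℝ := |l| with hLdef
  set M : ℝ := 2 + 2*L + L^2 with hMdef
  set C : ℝ := M^3 + (2 + 3*L + L^2 + L^3 + L^4) with hCdef
  have hL0 : 0 ≤ L := abs_nonneg l
  have hM0 : (0:ℝ) < M := by rw [hMdef]; nlinarith
  have hε : (0:ℝ) < min 1 (1/(2*M)) := lt_min one_pos (by positivity)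
  rw [Asymptotics.isBigO_iff]
  refine ⟨C, ?_⟩
  filter_upwards [Ioo_mem_nhdsGT_of_mem (Set.mem_Ico.2 ⟨le_refl (0:ℝ), hε⟩)] with x hxm
  obtain ⟨hx, hxe⟩ := hxm
  have hx1 : x ≤ 1 := le_trans hxe.le (min_le_left _ _)
  have hx2 : x ≤ 1/(2*M) := le_trans hxe.le (min_le_right _ _)
  obtain ⟨s, hs_def⟩ : ∃ s : ℝ, s = Real.sqrt x := ⟨_, rfl⟩
  have hs0 : 0 < s := hs_def ▸ Real.sqrt_pos.2 hx
  have hs2 : s^2 = x := hs_def ▸ Real.sq_sqrt hx.le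
  have hs1 : s ≤ 1 := by nlinarith
  have hsu : M * s^2 ≤ 1/2 := by
    rw [hs2]
    have h1 : M * x ≤ M * (1/(2*M)) := mul_le_mul_of_nonneg_left hx2 hM0.le
    have h2 : M * (1/(2*M)) = 1/2 := by field_simp
    linarith
  have e1 : x ^ ((1:ℝ)/2) = s := by
    have := rp_aux hx 1
    norm_num at this
    rw [← hs_def] at this
    simpa using this
  have e3 : x ^ ((3:ℝ)/2) = s^3 := by
    have := rp_aux hx 3; rw [← hs_def] at this; norm_num at this; exact this
  have e5 : x ^ ((5:ℝ)/2) = s^5 := by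
    have := rp_aux hx 5; rw [← hs_def] at this; norm_num at this; exact this
  have e7 : x ^ ((7:ℝ)/2) = s^7 := by
    have := rp_aux hx 7; rw [← hs_def] at this; norm_num at this; exact this
  have eneg : x ^ (-(1:ℝ)/2) = s⁻¹ := by
    rw [show (-(1:ℝ)/2) = -((1:ℝ)/2) by ring, Real.rpow_neg hx.le, e1]
  have key := key_aux l L s hLdef hs0 hs1 (by rw [← hMdef]; exact hsu)
  have eqexpr : deriv (deriv (Ffun l)) x - x ^ (-(1:ℝ)/2) * Ffun l x ^ ((3:ℝ)/2)
      = s⁻¹ * ((1 + 3*l/2*s^2 + 2*s^3 + 3*l^2/8*s^4) -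
        (1 + l*s^2 + 4/3*s^3 + 2*l/5*s^5 + 1/3*s^6 + 3*l^2/70*s^7) ^ ((3:ℝ)/2)) := by
    rw [hdd l x hx, Hfun, Ffun, eneg, e1, e3, e5, e7, ← hs2]
    field_simp
  rw [eqexpr, Real.norm_eq_abs, Real.norm_eq_abs, abs_mul, abs_inv,
    abs_of_nonneg hs0.le]
  have hC0 : 0 ≤ C := by rw [hCdef, hMdef]; positivity
  calc s⁻¹ * |_ - _| ≤ s⁻¹ * (((2 + 2*L + L^2)^3 + (2 + 3*L + L^2 + L^3 + L^4)) * s^5) := by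
        exact mul_le_mul_of_nonneg_left key (inv_nonneg.2 hs0.le)
    _ = C * s^4 := by rw [hCdef, hMdef]; field_simp
    _ = C * |x^2| := by
        rw [← hs2, abs_of_nonneg (by positivity : (0:ℝ) ≤ (s^2)^2)]; ring

/-- For the truncated Baker series
`y(x) = 1 + λx + (4/3)x^{3/2} + (2λ/5)x^{5/2} + (1/3)x³ + (3λ²/70)x^{7/2}`,
the Thomas–Fermi residual `y'' − x^{−1/2} y^{3/2}` is `O(x²)` as `x → 0⁺`;
moreover `y(0) = 1`, `y` tends to `1` as `x → 0⁺`, and `y` has right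
derivative `λ` at `0`. -/
theorem stmt_10 (l : ℝ) (y : ℝ → ℝ)
    (hy : ∀ x : ℝ, y x =
      1 + l * x + 4 / 3 * x ^ ((3 : ℝ) / 2) + 2 * l / 5 * x ^ ((5 : ℝ) / 2) +
        1 / 3 * x ^ (3 : ℕ) + 3 * l ^ 2 / 70 * x ^ ((7 : ℝ) / 2)) :
    (fun x : ℝ => deriv (deriv y) x - x ^ (-(1 : ℝ) / 2) * y x ^ ((3 : ℝ) / 2))
        =O[𝓝[>] (0 : ℝ)] (fun x : ℝ => x ^ 2) ∧
      y 0 = 1 ∧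
      Tendsto y (𝓝[>] (0 : ℝ)) (𝓝 1) ∧
      HasDerivWithinAt y l (Set.Ici 0) 0 := by
  have hyF : y = Ffun l := funext hy
  subst hyF
  refine ⟨bigO_aux l, hFzero l, ?_, (hF0 l).hasDerivWithinAt⟩
  have h := (hF0 l).continuousAt.continuousWithinAt (s := Set.Ioi (0:ℝ))
  have : Tendsto (Ffun l) (nhdsWithin 0 (Set.Ioi 0)) (nhds (Ffun l 0)) := h
  rwa [hFzero l] at this
end
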